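/- Let M be a finite-dimensional ℚ-vector space and Q : QuadraticForm ℚ M a negative definite quadratic form (Q m < 0 for every m ≠ 0). Let x be an element of the multiplicative submonoid Submonoid.closure (Set.range (ι Q)) of CliffordAlgebra Q such that x is integral over ℤ and there exists y : CliffordAlgebra Q, also integral over ℤ, with x * y = 1 and y * x = 1. Then x * reverse (involute x) = 1. -/

import Mathlib

open CliffordAlgebra MulOpposite

open Polynomial in
theorem isIntegral_int_unop {A : Type*} [Ring A] {z : Aᵐᵒᵖ}
    (h : IsIntegral ℤ z) : IsIntegral ℤ z.unop := by
  obtain ⟨p, hp, he⟩ := h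
  refine ⟨p, hp, ?_⟩
  have key : ∀ q : Polynomial ℤ,
      op (eval₂ (algebraMap ℤ A) z.unop q) = eval₂ (algebraMap ℤ Aᵐᵒᵖ) z q := by
    intro q
    induction q using Polynomial.induction_on' with
    | add a b ha hb => rw [eval₂_add, eval₂_add, op_add, ha, hb]
    | monomial n a =>
      rw [eval₂_monomial, eval₂_monomial, op_mul, op_pow, op_unop]
      simp only [algebraMap_int_eq, eq_intCast, op_intCast]
      exact (Int.cast_comm a _).symm
  have h2 := key p
  rw [he] at h2
  exact op_injective (by simpa using h2)

/-- The product of two commuting integral elements is integral. -/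
theorem isIntegral_mul_of_commute {R A : Type*} [CommRing R] [Ring A] [Algebra R A]
    {a b : A} (hab : Commute a b) (ha : IsIntegral R a) (hb : IsIntegral R b) :
    IsIntegral R (a * b) := by
  letI : CommRing (Algebra.adjoin R ({a, b} : Set A)) := by
    refine Algebra.adjoinCommRingOfComm R ?_
    rintro x hx y hy
    rcases hx with rfl | rfl <;> rcases hy with rfl | rfl
    · rfl
    · exact hab
    · exact hab.symm
    · rfl
  have haS : a ∈ Algebra.adjoin R ({a, b} : Set A) := Algebra.subset_adjoin (by simp)
  have hbS : b ∈ Algebra.adjoin R ({a, b} : Set A) := Algebra.subset_adjoin (by simp)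
  have hval : Function.Injective ((Algebra.adjoin R ({a, b} : Set A)).val) :=
    Subtype.val_injective
  have ha' : IsIntegral R (⟨a, haS⟩ : Algebra.adjoin R ({a, b} : Set A)) :=
    (isIntegral_algHom_iff (Algebra.adjoin R ({a, b} : Set A)).val hval).mp ha
  have hb' : IsIntegral R (⟨b, hbS⟩ : Algebra.adjoin R ({a, b} : Set A)) :=
    (isIntegral_algHom_iff (Algebra.adjoin R ({a, b} : Set A)).val hval).mp hb
  have h3 : IsIntegral R ((Algebra.adjoin R ({a, b} : Set A)).val
      (⟨a, haS⟩ * ⟨b, hbS⟩)) :=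
    (isIntegral_algHom_iff (Algebra.adjoin R ({a, b} : Set A)).val hval).mpr (ha'.mul hb')
  simpa using h3

/-- The Clifford norm of a product of vectors is a nonnegative scalar when `Q ≤ 0`. -/
theorem clifford_norm_scalar {M : Type*} [AddCommGroup M] [Module ℚ M]
    (Q : QuadraticForm ℚ M) (hQ : ∀ m : M, Q m ≤ 0)
    {x : CliffordAlgebra Q}
    (hx : x ∈ Submonoid.closure (Set.range (CliffordAlgebra.ι Q))) :
    ∃ c : ℚ, 0 ≤ c ∧ x * reverse (involute x) = algebraMap ℚ _ c := by
  induction hx using Submonoid.closure_induction with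
  | mem a ha =>
    obtain ⟨m, rfl⟩ := ha
    refine ⟨-Q m, by linarith [hQ m], ?_⟩
    rw [involute_ι, map_neg, reverse_ι, mul_neg, ι_sq_scalar, ← map_neg]
  | one => exact ⟨1, zero_le_one, by simp⟩
  | mul a b _ _ iha ihb =>
    obtain ⟨c, hc0, hc⟩ := iha
    obtain ⟨d, hd0, hd⟩ := ihb
    refine ⟨c * d, mul_nonneg hc0 hd0, ?_⟩
    have hrev : reverse (involute (a * b)) =
        reverse (involute b) * reverse (involute a) := by
      rw [map_mul, CliffordAlgebra.reverse.map_mul]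
    rw [hrev]
    calc a * b * (reverse (involute b) * reverse (involute a))
        = a * (b * reverse (involute b)) * reverse (involute a) := by
            rw [mul_assoc, ← mul_assoc b, ← mul_assoc]
      _ = a * algebraMap ℚ _ d * reverse (involute a) := by rw [hd]
      _ = algebraMap ℚ _ (c * d) := by
            rw [mul_assoc, Algebra.commutes, ← mul_assoc, hc, ← map_mul]

theorem clifford_unit_of_order_has_norm_one {M : Type*} [AddCommGroup M] [Module ℚ M]
    [FiniteDimensional ℚ M]
    (Q : QuadraticForm ℚ M) (hQ : ∀ m : M, m ≠ 0 → Q m < 0)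
    (x : CliffordAlgebra Q)
    (hx : x ∈ Submonoid.closure (Set.range (CliffordAlgebra.ι Q)))
    (hxint : IsIntegral ℤ x)
    (hunit : ∃ y : CliffordAlgebra Q, IsIntegral ℤ y ∧ x * y = 1 ∧ y * x = 1) :
    x * CliffordAlgebra.reverse (CliffordAlgebra.involute x) = 1 := by
  obtain ⟨y, hyint, hxy, hyx⟩ := hunit
  rcases subsingleton_or_nontrivial (CliffordAlgebra Q) with hss | hnt
  · exact Subsingleton.elim _ _
  have hQ' : ∀ m : M, Q m ≤ 0 := by
    intro m
    by_cases hm : m = 0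
    · simp [hm]
    · exact (hQ m hm).le
  obtain ⟨c, hc0, hc⟩ := clifford_norm_scalar Q hQ' hx
  set X := reverse (involute x) with hXdef
  set Y := reverse (involute y) with hYdef
  have hconj_int : ∀ z : CliffordAlgebra Q, IsIntegral ℤ z →
      IsIntegral ℤ (reverse (involute z)) := by
    intro z hz
    have h1 : IsIntegral ℤ (involute z) := map_isIntegral_int (involute (Q := Q)) hz
    have h2 : IsIntegral ℤ (reverseOp (involute z)) :=
      map_isIntegral_int (reverseOp (Q := Q)) h1
    have h3 := isIntegral_int_unop h2
    simp only [unop_reverseOp] at h3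
    convert h3
    exact Subsingleton.elim _ _
  have hXint : IsIntegral ℤ X := hconj_int x hxint
  have hYint : IsIntegral ℤ Y := hconj_int y hyint
  have hinj : Function.Injective (algebraMap ℚ (CliffordAlgebra Q)) :=
    (algebraMap ℚ (CliffordAlgebra Q)).injective
  -- c ≠ 0
  have hcne : c ≠ 0 := by
    rintro rfl
    rw [map_zero] at hc
    have hX0 : X = 0 := by
      calc X = (y * x) * X := by rw [hyx, one_mul]
        _ = y * (x * X) := by rw [mul_assoc]
        _ = 0 := by rw [hc, mul_zero]
    have hx0 : x = 0 := by
      have : reverse (involute X) = x := by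
        rw [hXdef, reverse_involute, reverse_reverse, involute_involute]
      rw [hX0] at this
      simpa using this.symm
    rw [hx0, zero_mul] at hxy
    exact zero_ne_one hxy
  -- X = c • y
  have hXy : X = algebraMap ℚ _ c * y := by
    calc X = (y * x) * X := by rw [hyx, one_mul]
      _ = y * (x * X) := by rw [mul_assoc]
      _ = y * algebraMap ℚ _ c := by rw [hc]
      _ = algebraMap ℚ _ c * y := (Algebra.commutes _ _).symm
  have hXx : X * x = algebraMap ℚ _ c := by
    rw [hXy, mul_assoc, hyx, mul_one]
  have hcomm : Commute x X := hc.trans hXx.symm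
  have hcint : IsIntegral ℤ c := by
    have : IsIntegral ℤ (algebraMap ℚ (CliffordAlgebra Q) c) :=
      hc ▸ isIntegral_mul_of_commute hcomm hxint hXint
    exact (isIntegral_algebraMap_iff hinj).mp this
  obtain ⟨n, hn⟩ := IsIntegrallyClosed.isIntegral_iff.mp hcint
  -- conj y is the inverse of conj x
  have hYX : Y * X = 1 := by
    have h4 : reverse (involute (x * y)) = Y * X := by
      rw [map_mul, CliffordAlgebra.reverse.map_mul]
    rw [hxy] at h4
    simpa using h4.symm
  have hY : Y = algebraMap ℚ _ c⁻¹ * x := by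
    have h5 : X * (algebraMap ℚ _ c⁻¹ * x) = 1 := by
      calc X * (algebraMap ℚ _ c⁻¹ * x)
          = (X * algebraMap ℚ _ c⁻¹) * x := by rw [mul_assoc]
        _ = (algebraMap ℚ _ c⁻¹ * X) * x := by rw [← Algebra.commutes]
        _ = algebraMap ℚ _ c⁻¹ * (X * x) := by rw [mul_assoc]
        _ = algebraMap ℚ _ c⁻¹ * algebraMap ℚ _ c := by rw [hXx]
        _ = 1 := by rw [← map_mul, inv_mul_cancel₀ hcne, map_one]
    calc Y = Y * (X * (algebraMap ℚ _ c⁻¹ * x)) := by rw [h5, mul_one]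
      _ = (Y * X) * (algebraMap ℚ _ c⁻¹ * x) := by rw [mul_assoc]
      _ = algebraMap ℚ _ c⁻¹ * x := by rw [hYX, one_mul]
  have hyY : y * Y = algebraMap ℚ _ c⁻¹ := by
    calc y * Y = y * (algebraMap ℚ _ c⁻¹ * x) := by rw [hY]
      _ = (y * algebraMap ℚ _ c⁻¹) * x := by rw [mul_assoc]
      _ = (algebraMap ℚ _ c⁻¹ * y) * x := by rw [← Algebra.commutes]
      _ = algebraMap ℚ _ c⁻¹ * (y * x) := by rw [mul_assoc]
      _ = algebraMap ℚ _ c⁻¹ := by rw [hyx, mul_one]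
  have hYy : Y * y = algebraMap ℚ _ c⁻¹ := by
    rw [hY, mul_assoc, hxy, mul_one]
  have hcomm2 : Commute y Y := hyY.trans hYy.symm
  have hcinv : IsIntegral ℤ c⁻¹ := by
    have : IsIntegral ℤ (algebraMap ℚ (CliffordAlgebra Q) c⁻¹) :=
      hyY ▸ isIntegral_mul_of_commute hcomm2 hyint hYint
    exact (isIntegral_algebraMap_iff hinj).mp this
  obtain ⟨m, hm⟩ := IsIntegrallyClosed.isIntegral_iff.mp hcinv
  have hq : (n : ℚ) * m = 1 := by
    have hn' : (n : ℚ) = c := by exact_mod_cast hn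
    have hm' : (m : ℚ) = c⁻¹ := by exact_mod_cast hm
    rw [hn', hm', mul_inv_cancel₀ hcne]
  have hnm : n * m = 1 := by exact_mod_cast hq
  have hcpos : 0 < c := lt_of_le_of_ne hc0 (Ne.symm hcne)
  have hnpos : 0 < n := by
    have hn' : (n : ℚ) = c := by exact_mod_cast hn
    exact_mod_cast hn' ▸ hcpos
  have hn1 : n = 1 := Int.eq_one_of_mul_eq_one_right hnpos.le hnm
  have hc1 : c = 1 := by
    have hn' : (n : ℚ) = c := by exact_mod_cast hn
    rw [← hn', hn1, Int.cast_one]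
  rw [hc, hc1, map_one]
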